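/- arXiv:2002.06628 — 2 statements merged into one kernel-verified Lean document; each statement's English description precedes it below -/
import Mathlib

section
/- In the additive fitness model, conditional on G_{t-1} and the fitness ξ_t of the entering node, the expected change in attachment probability of node i equals E[p_i^{AF}(t+1) − p_i^{AF}(t) | G_{t-1}, ξ_t] = − (ξ_i + D_{t-1}(i))(ξ_t + 1) / ((Ξ_{t-1} + 2(t-1))(Ξ_t + 2t)), where Ξ_t = ∑_{j ∈ V_t} ξ_j. -/
/-- Additive fitness model: conditional on G_{t-1} and ξ_t, the expected change in
attachment probability of node i equals
−(ξ_i + D_{t-1}(i))(ξ_t + 1)/((Ξ_{t-1} + 2(t-1))(Ξ_t + 2t)), where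
Ξ_{t-1} = ∑_{j ∈ V} ξ_j and Ξ_t = Ξ_{t-1} + ξ_t.  The expectation is a sum over
the selected node ℓ, chosen with probability (ξ_ℓ + D_{t-1}(ℓ))/(Ξ_{t-1}+2(t-1)). -/
theorem additive_fitness_expected_change
    {ι : Type*} [DecidableEq ι] (V : Finset ι) (D ξ : ι → ℝ) (ξt t : ℝ) (i : ι)
    (ht : 2 ≤ t) (hi : i ∈ V)
    (hD : ∀ j ∈ V, 0 ≤ D j) (hξ : ∀ j ∈ V, 0 ≤ ξ j) (hξt : 0 ≤ ξt)
    (hdeg : ∑ j ∈ V, D j = 2 * (t - 1)) :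
    (∑ ℓ ∈ V, ((ξ ℓ + D ℓ) / ((∑ j ∈ V, ξ j) + 2 * (t - 1))) *
        ((ξ i + D i + (if ℓ = i then (1:ℝ) else 0)) / ((∑ j ∈ V, ξ j) + ξt + 2 * t)))
      - (ξ i + D i) / ((∑ j ∈ V, ξ j) + 2 * (t - 1))
    = - ((ξ i + D i) * (ξt + 1)) /
        (((∑ j ∈ V, ξ j) + 2 * (t - 1)) * (((∑ j ∈ V, ξ j) + ξt) + 2 * t)) := by
  set S := ∑ j ∈ V, ξ j with hS
  have hS0 : 0 ≤ S := Finset.sum_nonneg hξ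
  have hA : S + 2 * (t - 1) > 0 := by linarith
  have hB : S + ξt + 2 * t > 0 := by linarith
  have key : ∀ ℓ ∈ V, ((ξ ℓ + D ℓ) / (S + 2 * (t - 1))) *
        ((ξ i + D i + (if ℓ = i then (1:ℝ) else 0)) / (S + ξt + 2 * t))
      = (ξ ℓ + D ℓ) * (ξ i + D i + (if ℓ = i then (1:ℝ) else 0)) /
          ((S + 2 * (t - 1)) * (S + ξt + 2 * t)) := by
    intro ℓ _
    rw [div_mul_div_comm]
  rw [Finset.sum_congr rfl key, ← Finset.sum_div]
  have hsum : ∑ ℓ ∈ V, (ξ ℓ + D ℓ) * (ξ i + D i + (if ℓ = i then (1:ℝ) else 0))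
      = (S + 2 * (t - 1)) * (ξ i + D i) + (ξ i + D i) := by
    have : ∀ ℓ ∈ V, (ξ ℓ + D ℓ) * (ξ i + D i + (if ℓ = i then (1:ℝ) else 0))
        = (ξ ℓ + D ℓ) * (ξ i + D i) + (if ℓ = i then ξ ℓ + D ℓ else 0) := by
      intro ℓ _; by_cases h : ℓ = i <;> simp [h] <;> ring
    rw [Finset.sum_congr rfl this, Finset.sum_add_distrib, ← Finset.sum_mul,
      Finset.sum_ite_eq' V i (fun ℓ => ξ ℓ + D ℓ), if_pos hi,
      Finset.sum_add_distrib, hdeg]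
  rw [hsum]
  field_simp
  ring
end

section
/- In the multiplicative fitness model, conditional on G_{t-1} and ξ_t, the expected change in attachment probability of node i is bounded below: E[p_i^{MF}(t+1) − p_i^{MF}(t) | G_{t-1}, ξ_t] ≥ ξ_i [ ξ_i D_{t-1}(i) / (ψ_{t-1}(ψ_{t-1} + ξ_i + ξ_t)) − (D_{t-1}(i)/ψ_{t-1}) · ∑_{ℓ ∈ V_{t-1}} ξ_ℓ D_{t-1}(ℓ)(ξ_ℓ + ξ_t) / ψ_{t-1}² ], assuming all fitnesses are positive. -/
/-- Multiplicative fitness model: conditional on G_{t-1} and ξ_t, the expected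
change in attachment probability of node i is bounded below:
E[Δp_i] ≥ ξ_i [ ξ_i D_i/(ψ(ψ+ξ_i+ξ_t)) − (D_i/ψ)·∑_ℓ ξ_ℓ D_ℓ(ξ_ℓ+ξ_t)/ψ² ],
where the expectation is a sum over the selected node ℓ, chosen with probability
ξ_ℓ D_ℓ/ψ, and ψ = ∑_{j∈V} ξ_j D_j > 0 with all fitnesses positive. -/
theorem multiplicative_fitness_expected_change_lower_bound
    {ι : Type*} [DecidableEq ι] (V : Finset ι) (D ξ : ι → ℝ) (ξt : ℝ) (i : ι)
    (hi : i ∈ V)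
    (hD : ∀ j ∈ V, 0 ≤ D j) (hξ : ∀ j ∈ V, 0 < ξ j) (hξt : 0 < ξt)
    (hψ : 0 < ∑ j ∈ V, ξ j * D j) :
    (∑ ℓ ∈ V, (ξ ℓ * D ℓ / (∑ j ∈ V, ξ j * D j)) *
        (ξ i * (D i + (if ℓ = i then (1:ℝ) else 0)) /
          ((∑ j ∈ V, ξ j * D j) + ξ ℓ + ξt)))
      - ξ i * D i / (∑ j ∈ V, ξ j * D j)
    ≥ ξ i * (ξ i * D i /
          ((∑ j ∈ V, ξ j * D j) * ((∑ j ∈ V, ξ j * D j) + ξ i + ξt))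
        - (D i / (∑ j ∈ V, ξ j * D j)) *
          ((∑ ℓ ∈ V, ξ ℓ * D ℓ * (ξ ℓ + ξt)) / (∑ j ∈ V, ξ j * D j) ^ 2)) := by
  set S := ∑ j ∈ V, ξ j * D j with hSdef
  set T := ∑ ℓ ∈ V, ξ ℓ * D ℓ * (ξ ℓ + ξt) with hTdef
  have hS : 0 < S := hψ
  have hSi : 0 < S + ξ i + ξt := by
    have := hξ i hi; linarith
  -- key elementary bound: 1/(S+a) ≥ (S-a)/S²
  have key : ∀ a : ℝ, 0 < a → (S - a) / S ^ 2 ≤ 1 / (S + a) := by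
    intro a ha
    rw [div_le_div_iff₀ (by positivity) (by positivity)]
    nlinarith
  -- per-term lower bound
  have hterm : ∀ ℓ ∈ V,
      (if ℓ = i then ξ i * (ξ i * D i / (S * (S + ξ i + ξt))) else 0)
        + ξ i * D i / S ^ 3 * (ξ ℓ * D ℓ * (S - (ξ ℓ + ξt)))
      ≤ (ξ ℓ * D ℓ / S) *
          (ξ i * (D i + (if ℓ = i then (1:ℝ) else 0)) / (S + ξ ℓ + ξt)) := by
    intro ℓ hℓ
    have hξℓ := hξ ℓ hℓ
    have hDℓ := hD ℓ hℓ
    have hξi := hξ i hi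
    have hDi := hD i hi
    have ha : 0 < ξ ℓ + ξt := by linarith
    have hSℓ : 0 < S + ξ ℓ + ξt := by linarith
    have hkey := key (ξ ℓ + ξt) ha
    have hS0 : S ≠ 0 := hS.ne'
    have hSℓ0 : S + ξ ℓ + ξt ≠ 0 := hSℓ.ne'
    have hmain : ξ i * D i / S ^ 3 * (ξ ℓ * D ℓ * (S - (ξ ℓ + ξt)))
        ≤ (ξ ℓ * D ℓ / S) * (ξ i * D i / (S + ξ ℓ + ξt)) := by
      have hc : 0 ≤ ξ ℓ * D ℓ * (ξ i * D i) / S := by positivity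
      have h2 := mul_le_mul_of_nonneg_left hkey hc
      calc ξ i * D i / S ^ 3 * (ξ ℓ * D ℓ * (S - (ξ ℓ + ξt)))
          = ξ ℓ * D ℓ * (ξ i * D i) / S * ((S - (ξ ℓ + ξt)) / S ^ 2) := by
            field_simp
            try ring
        _ ≤ ξ ℓ * D ℓ * (ξ i * D i) / S * (1 / (S + (ξ ℓ + ξt))) := h2
        _ = (ξ ℓ * D ℓ / S) * (ξ i * D i / (S + ξ ℓ + ξt)) := by
            rw [show S + (ξ ℓ + ξt) = S + ξ ℓ + ξt by ring]
            field_simp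
            try ring
    by_cases h : ℓ = i
    · subst h
      rw [if_pos rfl, if_pos rfl]
      have heq : (ξ ℓ * D ℓ / S) * (ξ ℓ * (D ℓ + 1) / (S + ξ ℓ + ξt))
          = ξ ℓ * (ξ ℓ * D ℓ / (S * (S + ξ ℓ + ξt)))
            + (ξ ℓ * D ℓ / S) * (ξ ℓ * D ℓ / (S + ξ ℓ + ξt)) := by
        field_simp; ring
      rw [heq]
      linarith
    · simp only [if_neg h, zero_add, add_zero]
      linarith
  have hsum := Finset.sum_le_sum hterm
  rw [Finset.sum_add_distrib, Finset.sum_ite_eq' V i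
    (fun _ => ξ i * (ξ i * D i / (S * (S + ξ i + ξt)))), if_pos hi,
    ← Finset.mul_sum] at hsum
  have hST : ∑ ℓ ∈ V, ξ ℓ * D ℓ * (S - (ξ ℓ + ξt)) = S * S - T := by
    have hc : ∀ ℓ ∈ V, ξ ℓ * D ℓ * (S - (ξ ℓ + ξt))
        = ξ ℓ * D ℓ * S - ξ ℓ * D ℓ * (ξ ℓ + ξt) := fun ℓ _ => by ring
    rw [Finset.sum_congr rfl hc, Finset.sum_sub_distrib, ← Finset.sum_mul,
      ← hSdef, ← hTdef]
  rw [hST] at hsum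
  rw [ge_iff_le, le_sub_iff_add_le]
  have hS0 : S ≠ 0 := hS.ne'
  have hSi0 : S + ξ i + ξt ≠ 0 := hSi.ne'
  calc ξ i * (ξ i * D i / (S * (S + ξ i + ξt)) - D i / S * (T / S ^ 2))
        + ξ i * D i / S
      = ξ i * (ξ i * D i / (S * (S + ξ i + ξt)))
        + ξ i * D i / S ^ 3 * (S * S - T) := by
        field_simp; ring
    _ ≤ _ := hsum
end
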